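/- Let F = x₂q₂ + x₃q₃ + x₄q₄ define a smooth cubic threefold X containing ℓ₀ = {x₂=x₃=x₄=0}, and suppose the binary quadratic form q₄(t₀,t₁,0,0,0) vanishes identically (ℓ₀ of second type with tangent plane {x₂=x₃=0}). Then the two binary quadratic forms a(t₀,t₁) = q₂(t₀,t₁,0,0,0) and b(t₀,t₁) = q₃(t₀,t₁,0,0,0) have no common projective root; equivalently their resultant is nonzero. -/

import Mathlib

open MvPolynomial

/-- If `F = x₂q₂ + x₃q₃ + x₄q₄` defines a smooth cubic threefold and `q₄` vanishes
identically on `ℓ₀ = {x₂=x₃=x₄=0}` (so `ℓ₀` is of the second type with tangent plane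
`{x₂=x₃=0}`), then the binary quadratic forms `q₂(t₀,t₁,0,0,0)` and `q₃(t₀,t₁,0,0,0)`
have no common projective root. -/
theorem second_type_q2_q3_no_common_root
    (F q₂ q₃ q₄ : MvPolynomial (Fin 5) ℂ)
    (h₂ : q₂.IsHomogeneous 2) (h₃ : q₃.IsHomogeneous 2) (h₄ : q₄.IsHomogeneous 2)
    (hF : F = X 2 * q₂ + X 3 * q₃ + X 4 * q₄)
    (hsmooth : ∀ p : Fin 5 → ℂ,
      eval p F = 0 → (∀ i : Fin 5, eval p (pderiv i F) = 0) → p = 0)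
    (hq₄ : ∀ t₀ t₁ : ℂ, eval ![t₀, t₁, 0, 0, 0] q₄ = 0) :
    ∀ t₀ t₁ : ℂ, ¬(t₀ = 0 ∧ t₁ = 0) →
      ¬(eval ![t₀, t₁, 0, 0, 0] q₂ = 0 ∧ eval ![t₀, t₁, 0, 0, 0] q₃ = 0) := by

  intro t₀ t₁ hne h
  obtain ⟨hq2, hq3⟩ := h
  set p : Fin 5 → ℂ := ![t₀, t₁, 0, 0, 0] with hp
  have hp2 : p 2 = 0 := rfl
  have hp3 : p 3 = 0 := rfl
  have hp4 : p 4 = 0 := rfl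
  have hF0 : eval p F = 0 := by
    simp [hF, hp2, hp3, hp4]
  have hd : ∀ i : Fin 5, eval p (pderiv i F) = 0 := by
    intro i
    have h4 := hq₄ t₀ t₁
    simp only [hF, map_add, pderiv_mul, pderiv_X, eval_mul, eval_add, hp2, hp3, hp4]
    simp only [eval_X, hp2, hp3, hp4, zero_mul, zero_add, add_zero]
    rw [hp] at hq2 hq3
    simp [hq2, hq3, h4, hp]
  have hzero := hsmooth p hF0 hd
  have ht0 : t₀ = 0 := by
    have := congrFun hzero 0; simpa [hp] using this
  have ht1 : t₁ = 0 := by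
    have := congrFun hzero 1; simpa [hp] using this
  exact hne ⟨ht0, ht1⟩
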